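/- arXiv:1502.02942 — 9 statements merged into one kernel-verified Lean document; each statement's English description precedes it below -/
import Mathlib

section
/- If B is a well-founded skipping relation (WFSK) on a transition system M, then B is a reduced well-founded skipping relation (RWFSK) on M. In particular, condition WFSK2(c) is redundant: if s → u, sBw, and for all s,u,x only WFSK2(c) ever holds along any chain of witnesses from w, a contradiction with the well-foundedness of rankl arises. -/
universe u v

section Defs

variable {S : Type u} {T : Type v}

/-- A fullpath of the transition relation `R`. -/
def FullPath (R : S → S → Prop) (σ : ℕ → S) : Prop := ∀ i, R (σ i) (σ (i+1))

/-- Strictly increasing sequences of naturals starting at 0. -/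
def IsINC (π : ℕ → ℕ) : Prop := StrictMono π ∧ π 0 = 0

/-- Every element of the i-th segment of `σ` (w.r.t. `π`) is `B`-related to the
first element of the i-th segment of `δ` (w.r.t. `ξ`). -/
def Corr (B : S → T → Prop) (σ : ℕ → S) (π : ℕ → ℕ) (δ : ℕ → T) (ξ : ℕ → ℕ) : Prop :=
  ∀ i n, π i ≤ n → n < π (i+1) → B (σ n) (δ (ξ i))

/-- `σ` matches `δ` under `B`. -/
def Match (B : S → T → Prop) (σ : ℕ → S) (δ : ℕ → T) : Prop :=
  ∃ π ξ, IsINC π ∧ IsINC ξ ∧ Corr B σ π δ ξ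

/-- Skipping simulation. -/
def IsSKS {Lbl : Type v} (R : S → S → Prop) (L : S → Lbl) (B : S → S → Prop) : Prop :=
  ∀ s w, B s w →
    L s = L w ∧
    ∀ σ, FullPath R σ → σ 0 = s → ∃ δ, FullPath R δ ∧ δ 0 = w ∧ Match B σ δ

/-- Well-founded skipping relation. -/
def IsWFSK {Lbl : Type v} (R : S → S → Prop) (L : S → Lbl) (B : S → S → Prop) : Prop :=
  (∀ s w, B s w → L s = L w) ∧
  ∃ (W : Type u) (lt : W → W → Prop) (_ : WellFounded lt)
    (rankt : S → S → W) (rankl : S → S → S → ℕ),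
    ∀ s u w, R s u → B s w →
      (∃ v, R w v ∧ B u v) ∨
      (B u w ∧ lt (rankt u w) (rankt s w)) ∨
      (∃ v, R w v ∧ B s v ∧ rankl v s u < rankl w s u) ∨
      (∃ v, (∃ x, R w x ∧ Relation.TransGen R x v) ∧ B u v)

/-- Reduced well-founded skipping relation. -/
def IsRWFSK {Lbl : Type v} (R : S → S → Prop) (L : S → Lbl) (B : S → S → Prop) : Prop :=
  (∀ s w, B s w → L s = L w) ∧
  ∃ (W : Type u) (lt : W → W → Prop) (_ : WellFounded lt) (rankt : S → S → W),
    ∀ s u w, R s u → B s w →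
      (B u w ∧ lt (rankt u w) (rankt s w)) ∨
      (∃ v, Relation.TransGen R w v ∧ B u v)

/-- Nodes of the computation tree of `R` rooted at `s`, represented as the finite
path from the root. -/
def CtreeNode (R : S → S → Prop) (s : S) (l : List S) : Prop :=
  l.head? = some s ∧ l.Chain' R

/-- Nodes of the tree `ranktCt(M,s,w)`: empty if `¬ B s w`; otherwise the largest
subtree of `ctree(M,s)` all of whose non-root nodes `⟨s,…,x⟩` satisfy `x B w` and
`¬ (x B v)` for every `v` with `w →⁺ v`. -/
def RanktCtNode (R : S → S → Prop) (B : S → S → Prop) (s w : S) (l : List S) : Prop :=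
  B s w ∧ CtreeNode R s l ∧
  ∀ x ∈ l.tail, B x w ∧ ∀ v, Relation.TransGen R w v → ¬ B x v

/-- `c` is a child of `p` in the tree with node-predicate `T'`. -/
def ChildRel (T' : List S → Prop) (c p : List S) : Prop :=
  T' c ∧ T' p ∧ ∃ v, c = p ++ [v]

-- The ordinal `size` of a node of a tree all of whose paths are finite:
-- `size(t,x) = ⋃_{c child of x} (size(t,c)+1)`.
open Classical in
noncomputable def nodeSize (T' : List S → Prop) (l : List S) : Ordinal.{u} :=
  if h : WellFounded (ChildRel T') then (h.apply l).rank else 0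

/-- `size(ranktCt(M,s,w))`: the size of the root `⟨s⟩`. -/
noncomputable def treeSize (R : S → S → Prop) (B : S → S → Prop) (s w : S) : Ordinal.{u} :=
  nodeSize (RanktCtNode R B s w) [s]

end Defs
/-- If `B` is a WFSK on a transition system, then `B` is an RWFSK on it
(condition WFSK2(c) is redundant). -/
theorem wfsk_implies_rwfsk {S : Type u} {Lbl : Type v}
    (R : S → S → Prop) (L : S → Lbl) (hR : ∀ s, ∃ u, R s u)
    (B : S → S → Prop) (h : IsWFSK R L B) : IsRWFSK R L B := by
  obtain ⟨h1, W, lt, hwf, rankt, rankl, h2⟩ := h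
  refine ⟨h1, W, lt, hwf, rankt, ?_⟩
  intro s u w hsu hsw
  suffices H : ∀ n w, rankl w s u ≤ n → B s w →
      (B u w ∧ lt (rankt u w) (rankt s w)) ∨
      (∃ v, Relation.TransGen R w v ∧ B u v) from H _ w le_rfl hsw
  intro n
  induction n with
  | zero =>
    intro w hle hsw
    rcases h2 s u w hsu hsw with ⟨v, hv, huv⟩ | hb | ⟨v, hv, hsv, hlt⟩ | ⟨v, ⟨x, hx, hxv⟩, huv⟩
    · exact Or.inr ⟨v, Relation.TransGen.single hv, huv⟩
    · exact Or.inl hb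
    · omega
    · exact Or.inr ⟨v, Relation.TransGen.head hx hxv, huv⟩
  | succ n ih =>
    intro w hle hsw
    rcases h2 s u w hsu hsw with ⟨v, hv, huv⟩ | hb | ⟨v, hv, hsv, hlt⟩ | ⟨v, ⟨x, hx, hxv⟩, huv⟩
    · exact Or.inr ⟨v, Relation.TransGen.single hv, huv⟩
    · exact Or.inl hb
    · rcases ih v (by omega) hsv with hfst | ⟨v', hv', huv'⟩
      · exact Or.inr ⟨v, Relation.TransGen.single hv, hfst.1⟩
      · exact Or.inr ⟨v', Relation.TransGen.head hv hv', huv'⟩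
    · exact Or.inr ⟨v, Relation.TransGen.head hx hxv, huv⟩
end

section
/- Soundness: If B is a reduced well-founded skipping relation (RWFSK) on a transition system M, then B is a skipping simulation (SKS) on M. -/
universe u v

theorem transGen_path {S : Type u} {R : S → S → Prop} {a b : S} (h : Relation.TransGen R a b) :
    ∃ (m : ℕ) (g : ℕ → S), 1 ≤ m ∧ g 0 = a ∧ g m = b ∧ ∀ i < m, R (g i) (g (i+1)) := by
  induction h with
  | @single c hr =>
    refine ⟨1, fun i => if i = 0 then a else c, le_refl _, by simp, by simp, ?_⟩
    intro i hi
    interval_cases i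
    simpa using hr
  | @tail b2 c h1 hr ih =>
    obtain ⟨m, g, hm, hg0, hgm, hstep⟩ := ih
    refine ⟨m + 1, fun i => if i ≤ m then g i else c, by omega, by simp [hg0], by simp, ?_⟩
    intro i hi
    rcases Nat.lt_or_ge i m with hlt | hge
    · simpa [Nat.le_of_lt hlt, Nat.succ_le_of_lt hlt] using hstep i hlt
    · have : i = m := by omega
      subst this
      simp only [le_refl, if_pos, Nat.lt_irrefl]
      rw [if_neg (by omega), hgm]
      exact hr

theorem rwfsk_aux {S : Type u} {R : S → S → Prop} {B : S → S → Prop}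
    {W : Type u} {lt : W → W → Prop} (hwf : WellFounded lt) (rankt : S → S → W)
    (hstep : ∀ s u w, R s u → B s w →
      (B u w ∧ lt (rankt u w) (rankt s w)) ∨ (∃ v, Relation.TransGen R w v ∧ B u v)) :
    ∀ (w : S) (σ : ℕ → S), FullPath R σ → B (σ 0) w →
      ∃ δ, FullPath R δ ∧ δ 0 = w ∧ Match B σ δ := by
  classical
  intro w σ hσ hB
  -- segment lemma
  have seg : ∀ (wc : S) (p : ℕ), B (σ p) wc → ∃ k, 1 ≤ k ∧ (∀ i < k, B (σ (p+i)) wc) ∧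
      ∃ v, Relation.TransGen R wc v ∧ B (σ (p+k)) v := by
    intro wc p
    refine (InvImage.wf (fun p => rankt (σ p) wc) hwf).induction
      (C := fun p => B (σ p) wc → ∃ k, 1 ≤ k ∧ (∀ i < k, B (σ (p+i)) wc) ∧
        ∃ v, Relation.TransGen R wc v ∧ B (σ (p+k)) v) p ?_
    intro p IH hBp
    rcases hstep (σ p) (σ (p+1)) wc (hσ p) hBp with ⟨hB1, hlt⟩ | ⟨v, hv, hBv⟩
    · rcases IH (p+1) hlt hB1 with ⟨k, hk1, hall, v, hv, hBv⟩
      refine ⟨k+1, by omega, ?_, v, hv, by rwa [show p + (k+1) = (p+1)+k by omega]⟩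
      intro i hi
      rcases Nat.eq_zero_or_pos i with rfl | hipos
      · simpa using hBp
      · have := hall (i-1) (by omega)
        rwa [show p + 1 + (i-1) = p + i by omega] at this
    · refine ⟨1, le_refl _, ?_, v, hv, hBv⟩
      intro i hi
      interval_cases i
      simpa using hBp
  have stepEx : ∀ (p : ℕ) (wc : S), B (σ p) wc → ∃ (k m : ℕ) (g : ℕ → S),
      1 ≤ k ∧ 1 ≤ m ∧ g 0 = wc ∧ (∀ i < m, R (g i) (g (i+1))) ∧
      (∀ i < k, B (σ (p+i)) wc) ∧ B (σ (p+k)) (g m) := by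
    intro p wc hBp
    obtain ⟨k, hk, hall, v, hv, hBv⟩ := seg wc p hBp
    obtain ⟨m, g, hm, hg0, hgm, hgstep⟩ := transGen_path hv
    exact ⟨k, m, g, hk, hm, hg0, hgstep, hall, by rwa [hgm]⟩
  choose K M G hK hM hG0 hGstep hBall hBnext using stepEx
  -- iterated stages
  let D := {x : ℕ × S // B (σ x.1) x.2}
  let next : D → D := fun d =>
    ⟨(d.1.1 + K d.1.1 d.1.2 d.2, G d.1.1 d.1.2 d.2 (M d.1.1 d.1.2 d.2)), hBnext _ _ _⟩
  let st : ℕ → D := fun n => Nat.rec (⟨(0, w), hB⟩ : D) (fun _ d => next d) n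
  let P : ℕ → ℕ := fun n => (st n).1.1
  let Wc : ℕ → S := fun n => (st n).1.2
  let kn : ℕ → ℕ := fun n => K (P n) (Wc n) (st n).2
  let mn : ℕ → ℕ := fun n => M (P n) (Wc n) (st n).2
  let gn : ℕ → ℕ → S := fun n => G (P n) (Wc n) (st n).2
  have hP0 : P 0 = 0 := rfl
  have hWc0 : Wc 0 = w := rfl
  have hPsucc : ∀ n, P (n+1) = P n + kn n := fun n => rfl
  have hWcsucc : ∀ n, Wc (n+1) = gn n (mn n) := fun n => rfl
  have hgn0 : ∀ n, gn n 0 = Wc n := fun n => hG0 _ _ _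
  have hknpos : ∀ n, 1 ≤ kn n := fun n => hK _ _ _
  have hmnpos : ∀ n, 1 ≤ mn n := fun n => hM _ _ _
  have hgnstep : ∀ n, ∀ i < mn n, R (gn n i) (gn n (i+1)) := fun n => hGstep _ _ _
  have hBseg : ∀ n, ∀ i < kn n, B (σ (P n + i)) (Wc n) := fun n => hBall _ _ _
  -- the delta index sequence
  let Xi : ℕ → ℕ := fun n => Nat.rec 0 (fun n acc => acc + mn n) n
  have hXi0 : Xi 0 = 0 := rfl
  have hXisucc : ∀ n, Xi (n+1) = Xi n + mn n := fun n => rfl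
  have hXimono : StrictMono Xi := strictMono_nat_of_lt_succ (fun n => by
    have := hmnpos n; rw [hXisucc]; omega)
  have hXige : ∀ n, n ≤ Xi n := fun n => hXimono.le_apply
  let idx : ℕ → ℕ := fun j => @Nat.findGreatest (fun n => Xi n ≤ j) (fun n => Nat.decLe _ _) j
  have hidx_le : ∀ j, Xi (idx j) ≤ j := by
    intro j
    exact @Nat.findGreatest_spec 0 (fun n => Xi n ≤ j) (fun n => Nat.decLe _ _) j (Nat.zero_le j) (show Xi 0 ≤ j by omega)
  have hidx_lt : ∀ j, j < Xi (idx j + 1) := by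
    intro j
    by_contra hcon
    push_neg at hcon
    have h1 : idx j + 1 ≤ j := le_trans (hXige _) hcon
    exact @Nat.findGreatest_is_greatest (idx j + 1) (fun n => Xi n ≤ j) (fun n => Nat.decLe _ _) j (Nat.lt_succ_self _) h1 hcon
  have hidx_eq : ∀ n j, Xi n ≤ j → j < Xi (n+1) → idx j = n := by
    intro n j h1 h2
    rcases Nat.lt_trichotomy (idx j) n with hlt | heq | hgt
    · have h3 := hXimono.monotone (show idx j + 1 ≤ n by omega)
      have := hidx_lt j
      omega
    · exact heq
    · have h3 := hXimono.monotone (show n + 1 ≤ idx j by omega)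
      have := hidx_le j
      omega
  let delta : ℕ → S := fun j => gn (idx j) (j - Xi (idx j))
  have hdelta : ∀ n j, Xi n ≤ j → j < Xi (n+1) → delta j = gn n (j - Xi n) := by
    intro n j h1 h2
    show gn (idx j) (j - Xi (idx j)) = _
    rw [hidx_eq n j h1 h2]
  refine ⟨delta, ?_, ?_, P, Xi, ⟨?_, hP0⟩, ⟨hXimono, hXi0⟩, ?_⟩
  · -- FullPath
    intro j
    set n := idx j with hn
    have h1 : Xi n ≤ j := hidx_le j
    have h2 : j < Xi (n+1) := hidx_lt j
    have hdj : delta j = gn n (j - Xi n) := hdelta n j h1 h2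
    rcases Nat.lt_or_ge (j+1) (Xi (n+1)) with hcase | hcase
    · rw [hdj, hdelta n (j+1) (by omega) hcase,
        show j + 1 - Xi n = (j - Xi n) + 1 by omega]
      exact hgnstep n _ (by rw [hXisucc] at hcase; omega)
    · have hje : j + 1 = Xi (n+1) := by omega
      have hd1 : delta (j+1) = gn (n+1) 0 := by
        have hx := hdelta (n+1) (j+1) (by omega) (by rw [hXisucc (n+1)]; have := hmnpos (n+1); omega)
        rwa [show j + 1 - Xi (n+1) = 0 by omega] at hx
      have hmneq : j - Xi n = mn n - 1 := by rw [hXisucc] at hje; omega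
      rw [hdj, hd1, hmneq, (hgn0 (n+1)).trans (hWcsucc n)]
      have := hmnpos n
      have := hgnstep n (mn n - 1) (by omega)
      rwa [show mn n - 1 + 1 = mn n by omega] at this
  · -- delta 0 = w
    show gn (idx 0) (0 - Xi (idx 0)) = w
    have : idx 0 = 0 := hidx_eq 0 0 (le_refl _) (by rw [hXisucc, hXi0]; have := hmnpos 0; omega)
    rw [this, hXi0, hgn0, hWc0]
  · -- StrictMono P
    exact strictMono_nat_of_lt_succ (fun n => by have := hknpos n; rw [hPsucc]; omega)
  · -- Corr
    intro i n h1 h2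
    have hdx : delta (Xi i) = Wc i := by
      rw [hdelta i (Xi i) (le_refl _) (hXimono (Nat.lt_succ_self i)), Nat.sub_self, hgn0]
    rw [hdx]
    rw [hPsucc] at h2
    have := hBseg i (n - P i) (by omega)
    rwa [show P i + (n - P i) = n by omega] at this

/-- Soundness: If `B` is an RWFSK on a transition system, then `B` is an SKS on it. -/
theorem rwfsk_implies_sks {S : Type u} {Lbl : Type v}
    (R : S → S → Prop) (L : S → Lbl) (hR : ∀ s, ∃ u, R s u)
    (B : S → S → Prop) (h : IsRWFSK R L B) : IsSKS R L B := by
  obtain ⟨hL, W, lt, hwf, rankt, hstep⟩ := h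
  intro s w hBsw
  refine ⟨hL s w hBsw, ?_⟩
  intro σ hσ hs0
  exact rwfsk_aux hwf rankt hstep w σ hσ (by rwa [hs0])
end

section
/- Completeness: If B is a skipping simulation (SKS) on a transition system M, then B is a reduced well-founded skipping relation (RWFSK) on M. The witnessing rank function is rankt(s,w) = size(ranktCt(M,s,w)), valued in the ordinals below the successor cardinal of max(|S|, ω). -/
universe u v

noncomputable def WellFounded.rank {α : Type u} {r : α → α → Prop} (hwf : WellFounded r)
    (a : α) : Ordinal.{u} := (hwf.apply a).rank
theorem WellFounded.rank_eq {α : Type u} {r : α → α → Prop} {hwf : WellFounded r} {a : α} :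
    hwf.rank a = ⨆ b : { b // r b a }, Order.succ (hwf.rank b) := (hwf.apply a).rank_eq
theorem WellFounded.rank_lt_of_rel {α : Type u} {r : α → α → Prop} (hwf : WellFounded r)
    {a b : α} (h : r a b) : hwf.rank a < hwf.rank b := Acc.rank_lt_of_rel _ h
section ProofAux

set_option linter.deprecated false

variable {S : Type u} {Lbl : Type v} {R : S → S → Prop} {L : S → Lbl} {B : S → S → Prop}

lemma fullPath_transGen {δ : ℕ → S} (hδ : FullPath R δ) : ∀ {k : ℕ}, 0 < k →
    Relation.TransGen R (δ 0) (δ k)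
  | k + 1, _ => by
    rcases Nat.eq_zero_or_pos k with rfl | hk
    · exact Relation.TransGen.single (hδ 0)
    · exact (fullPath_transGen hδ hk).tail (hδ k)

lemma exists_desc {α : Type*} {r : α → α → Prop} (hwf : ¬ WellFounded r) :
    ∃ g : ℕ → α, ∀ n, r (g (n + 1)) (g n) := by
  classical
  have hx : ∃ x, ¬ Acc r x := by
    by_contra hall
    push_neg at hall
    exact hwf ⟨fun x => hall x⟩
  have hstep : ∀ x : {a // ¬ Acc r a}, ∃ y : {a // ¬ Acc r a}, r y.1 x.1 := by
    rintro ⟨x, hx⟩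
    rcases exists_not_acc_lt_of_not_acc hx with ⟨y, hy, hr⟩
    exact ⟨⟨y, hy⟩, hr⟩
  choose f hf using hstep
  obtain ⟨x, hx⟩ := hx
  refine ⟨fun n => (f^[n] ⟨x, hx⟩).1, fun n => ?_⟩
  simp only [Function.iterate_succ', Function.comp_apply]
  exact hf _

lemma sks_no_infinite (h : IsSKS R L B) {s w : S} (hsw : B s w) (σ : ℕ → S)
    (hσ : FullPath R σ) (h0 : σ 0 = s)
    (hB : ∀ n, 0 < n → ∀ v, Relation.TransGen R w v → ¬ B (σ n) v) : False := by
  obtain ⟨δ, hδ, hδ0, π, ξ, hπ, hξ, hcorr⟩ := (h s w hsw).2 σ hσ h0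
  have hπ1 : 0 < π 1 := by simpa [hπ.2] using hπ.1 Nat.zero_lt_one
  have hξ1 : 0 < ξ 1 := by simpa [hξ.2] using hξ.1 Nat.zero_lt_one
  have hb := hcorr 1 (π 1) le_rfl (hπ.1 (Nat.lt_succ_self 1))
  exact hB (π 1) hπ1 (δ (ξ 1)) (hδ0 ▸ fullPath_transGen hδ hξ1) hb

lemma wf_ranktCt (h : IsSKS R L B) (s w : S) :
    WellFounded (ChildRel (RanktCtNode R B s w)) := by
  by_contra hwf
  obtain ⟨g, hstep⟩ := exists_desc hwf
  have hnode : ∀ n, RanktCtNode R B s w (g n) := fun n => (hstep n).2.1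
  have hsw : B s w := (hnode 0).1
  have hext : ∀ n, ∃ v, g (n + 1) = g n ++ [v] := fun n => (hstep n).2.2
  have hlen0 : 0 < (g 0).length := by
    have hh := (hnode 0).2.1.1
    cases h0 : g 0 with
    | nil => rw [h0] at hh; simp at hh
    | cons a t => simp [h0]
  have hlen : ∀ n, n < (g n).length := by
    intro n
    induction n with
    | zero => exact hlen0
    | succ n ih =>
      obtain ⟨v, hv⟩ := hext n
      rw [hv, List.length_append]
      simp only [List.length_singleton]
      omega
  let σ : ℕ → S := fun n => (g n).getD n s
  have hσget : ∀ n, σ n = (g n).getD n s := fun _ => rfl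
  have hstab : ∀ n, (g n).getD n s = (g (n + 1)).getD n s := by
    intro n
    obtain ⟨v, hv⟩ := hext n
    rw [hv, List.getD_append _ _ _ _ (hlen n)]
  have hfull : FullPath R σ := by
    intro n
    have hc : (g (n + 1)).Chain' R := (hnode (n + 1)).2.1.2
    rw [List.Chain', List.isChain_iff_getElem] at hc
    have h2 := hlen (n + 1)
    have hn1 : n < (g (n + 1)).length := by omega
    have hr := hc n (by omega)
    show R (σ n) (σ (n + 1))
    rw [hσget n, hσget (n + 1), hstab n,
      List.getD_eq_getElem _ _ hn1, List.getD_eq_getElem _ _ h2]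
    exact hr
  have h0 : σ 0 = s := by
    have hh := (hnode 0).2.1.1
    rw [hσget]
    cases hg0 : g 0 with
    | nil => rw [hg0] at hh; simp at hh
    | cons a t =>
      rw [hg0] at hh
      simp only [List.head?_cons, Option.some.injEq] at hh
      rw [List.getD_cons_zero, hh]
  have hmem : ∀ n, 0 < n → σ n ∈ (g n).tail := by
    intro n hn
    rw [hσget]
    cases hgn : g n with
    | nil => have := hlen n; rw [hgn] at this; simp at this
    | cons a t =>
      have hlt : n < (a :: t).length := by rw [← hgn]; exact hlen n
      obtain ⟨m, rfl⟩ : ∃ m, n = m + 1 := ⟨n - 1, by omega⟩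
      rw [List.getD_cons_succ, List.tail_cons]
      have hm : m < t.length := by simp at hlt; omega
      rw [List.getD_eq_getElem _ _ hm]
      exact List.getElem_mem hm
  exact sks_no_infinite h hsw σ hfull h0
    (fun n hn v hv => ((hnode n).2.2 _ (hmem n hn)).2 v hv)

lemma rank_cons_le {T1 T2 : List S → Prop} (h1 : WellFounded (ChildRel T1))
    (h2 : WellFounded (ChildRel T2)) (a : S)
    (hmap : ∀ l, T1 l → T2 (a :: l)) :
    ∀ l, h1.rank l ≤ h2.rank (a :: l) := by
  intro l
  induction l using h1.induction with
  | _ l ih =>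
    rw [WellFounded.rank_eq]
    apply Ordinal.iSup_le
    rintro ⟨c, hc⟩
    have hc2 : ChildRel T2 (a :: c) (a :: l) := by
      obtain ⟨hTc, hTl, v, rfl⟩ := hc
      exact ⟨hmap _ hTc, hmap _ hTl, v, rfl⟩
    calc Order.succ (h1.rank c) ≤ Order.succ (h2.rank (a :: c)) :=
          Order.succ_le_succ (ih c hc)
      _ ≤ h2.rank (a :: l) := Order.succ_le_of_lt (h2.rank_lt_of_rel hc2)

lemma rank_lt_ord_of_regular {α : Type u} {r : α → α → Prop} (hw : WellFounded r)
    {c : Cardinal.{u}} (hc : c.IsRegular) (hcard : Cardinal.mk α < c) (a : α) :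
    hw.rank a < c.ord := by
  induction a using hw.induction with
  | _ a ih =>
    rw [WellFounded.rank_eq]
    apply Ordinal.iSup_lt_ord
    · rw [hc.cof_eq]
      exact lt_of_le_of_lt (Cardinal.mk_subtype_le _) hcard
    · rintro ⟨b, hb⟩
      exact (Cardinal.isSuccLimit_ord hc.aleph0_le).succ_lt (ih b hb)

lemma step_aux (h : IsSKS R L B) (hR : ∀ s, ∃ u, R s u) {s u w : S}
    (hsu : R s u) (hsw : B s w) :
    B u w ∨ ∃ v, Relation.TransGen R w v ∧ B u v := by
  classical
  let ext : ℕ → S := fun n => Nat.rec u (fun _ x => Classical.choose (hR x)) n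
  have hext : ∀ n, R (ext n) (ext (n + 1)) := fun n => Classical.choose_spec (hR (ext n))
  let σ : ℕ → S := fun n => Nat.rec s (fun k _ => ext k) n
  have hσ : FullPath R σ := by
    intro i
    cases i with
    | zero => exact hsu
    | succ n => exact hext n
  have hσ1 : σ 1 = u := rfl
  obtain ⟨δ, hδ, hδ0, π, ξ, hπ, hξ, hcorr⟩ := (h s w hsw).2 σ hσ rfl
  have hπ1 : 0 < π 1 := by simpa [hπ.2] using hπ.1 Nat.zero_lt_one
  have hξ1 : 0 < ξ 1 := by simpa [hξ.2] using hξ.1 Nat.zero_lt_one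
  rcases lt_or_ge 1 (π 1) with hlt | hge
  · left
    have hb := hcorr 0 1 (by rw [hπ.2]; omega) hlt
    rwa [hξ.2, hδ0, hσ1] at hb
  · right
    have hπ2 : 1 < π 2 := lt_of_le_of_lt hπ1 (hπ.1 (Nat.lt_succ_self 1))
    have hb := hcorr 1 1 hge hπ2
    exact ⟨δ (ξ 1), hδ0 ▸ fullPath_transGen hδ hξ1, hσ1 ▸ hb⟩

lemma node_singleton {s w : S} (hsw : B s w) : RanktCtNode R B s w [s] :=
  ⟨hsw, ⟨rfl, List.isChain_singleton s⟩, by simp⟩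

lemma node_cons {s u w : S} (hsu : R s u) (hsw : B s w) (huw : B u w)
    (hskip : ∀ v, Relation.TransGen R w v → ¬ B u v) :
    ∀ l, RanktCtNode R B u w l → RanktCtNode R B s w (s :: l) := by
  rintro l ⟨_, ⟨hhead, hchain⟩, htail⟩
  refine ⟨hsw, ⟨rfl, ?_⟩, ?_⟩
  · rw [List.Chain', List.isChain_cons]
    refine ⟨fun y hy => ?_, hchain⟩
    rw [hhead, Option.mem_def, Option.some.injEq] at hy
    rw [← hy]
    exact hsu
  · intro x hx
    simp only [List.tail_cons] at hx
    cases l with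
    | nil => simp at hhead
    | cons a t =>
      simp only [List.head?_cons, Option.some.injEq] at hhead
      rcases List.mem_cons.1 hx with rfl | hx'
      · rw [hhead]; exact ⟨huw, hskip⟩
      · exact htail x hx'

lemma main_step (h : IsSKS R L B) (hR : ∀ s, ∃ u, R s u) {s u w : S}
    (hsu : R s u) (hsw : B s w) :
    (B u w ∧ treeSize R B u w < treeSize R B s w) ∨
      ∃ v, Relation.TransGen R w v ∧ B u v := by
  by_cases hskip : ∃ v, Relation.TransGen R w v ∧ B u v
  · exact Or.inr hskip
  push_neg at hskip
  rcases step_aux h hR hsu hsw with huw | hex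
  · left
    refine ⟨huw, ?_⟩
    have wfu := wf_ranktCt h u w
    have wfs := wf_ranktCt h s w
    have hmap := node_cons hsu hsw huw hskip
    have e1 : treeSize R B u w = wfu.rank [u] := by
      unfold treeSize nodeSize; exact dif_pos wfu
    have e2 : treeSize R B s w = wfs.rank [s] := by
      unfold treeSize nodeSize; exact dif_pos wfs
    rw [e1, e2]
    have h1 : wfu.rank [u] ≤ wfs.rank [s, u] := rank_cons_le wfu wfs s hmap [u]
    have h2 : wfs.rank [s, u] < wfs.rank [s] := by
      apply wfs.rank_lt_of_rel
      exact ⟨hmap [u] (node_singleton huw), node_singleton hsw, u, rfl⟩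
    exact lt_of_le_of_lt h1 h2
  · exact Or.inr hex

end ProofAux

/-- Completeness: If `B` is an SKS, then `B` is an RWFSK; the witnessing
rank function is `rankt(s,w) = size(ranktCt(M,s,w))`, valued in the ordinals below the
successor cardinal of `max(|S|, ℵ₀)` (i.e. of cardinality at most `max(|S|, ℵ₀)`). -/
theorem sks_implies_rwfsk {S : Type u} {Lbl : Type v}
    (R : S → S → Prop) (L : S → Lbl) (hR : ∀ s, ∃ u, R s u)
    (B : S → S → Prop) (h : IsSKS R L B) :
    IsRWFSK R L B ∧
    (∀ s u w, R s u → B s w →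
      (B u w ∧ treeSize R B u w < treeSize R B s w) ∨
      (∃ v, Relation.TransGen R w v ∧ B u v)) ∧
    (∀ s w, (treeSize R B s w).card ≤ max (Cardinal.mk S) Cardinal.aleph0) := by
  have hcardlt : ∀ s w : S,
      treeSize R B s w < (Order.succ (max (Cardinal.mk S) Cardinal.aleph0)).ord := by
    intro s w
    have : Nonempty S := ⟨s⟩
    have wfs := wf_ranktCt h s w
    have e1 : treeSize R B s w = wfs.rank [s] := by
      unfold treeSize nodeSize; exact dif_pos wfs
    rw [e1]
    apply rank_lt_ord_of_regular wfs (Cardinal.isRegular_succ (le_max_right _ _))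
    rw [Cardinal.mk_list_eq_max_mk_aleph0]
    exact Order.lt_succ _
  have hcard' : ∀ s w, (treeSize R B s w).card ≤ max (Cardinal.mk S) Cardinal.aleph0 := by
    intro s w
    have hlt := hcardlt s w
    rw [Cardinal.lt_ord] at hlt
    exact Order.lt_succ_iff.1 hlt
  refine ⟨⟨fun s w hsw => (h s w hsw).1, ?_⟩,
    fun s u w hsu hsw => main_step h hR hsu hsw, hcard'⟩
  refine ⟨(Order.succ (max (Cardinal.mk S) Cardinal.aleph0)).ord.ToType, (· < ·),
    (inferInstance : IsWellFounded _ (· < ·)).wf,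
    fun s w => Ordinal.ToType.mk ⟨treeSize R B s w, hcardlt s w⟩, ?_⟩
  intro s u w hsu hsw
  rcases main_step h hR hsu hsw with ⟨huw, hlt⟩ | hex
  · exact Or.inl ⟨huw, (OrderIso.lt_iff_lt _).2 (Subtype.mk_lt_mk.2 hlt)⟩
  · exact Or.inr hex
end

section
/- Every path in the tree ranktCt(M,s,w) is finite, when B is a skipping simulation on M. -/
universe u v

/-- Every path of `ranktCt(M,s,w)` is finite (there is no infinite
descending chain of children), when `B` is a skipping simulation on `M`. -/
theorem ranktCt_paths_finite {S : Type u} {Lbl : Type v}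
    (R : S → S → Prop) (L : S → Lbl) (hR : ∀ s, ∃ u, R s u)
    (B : S → S → Prop) (h : IsSKS R L B) (s w : S) :
    ¬ ∃ f : ℕ → List S, ∀ n, ChildRel (RanktCtNode R B s w) (f (n+1)) (f n) := by
  rintro ⟨f, hf⟩
  choose v hv using fun n => (hf n).2.2
  have hnode : ∀ n, RanktCtNode R B s w (f n) := fun n => (hf n).2.1
  have hne : ∀ n, f n ≠ [] := by
    intro n hnil
    have := (hnode n).2.1.1
    rw [hnil] at this; simp at this
  -- v n is in the tail of f (n+1)
  have htail : ∀ n, v n ∈ (f (n+1)).tail := by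
    intro n
    rw [hv n]
    obtain ⟨a, t, ht⟩ := List.exists_cons_of_ne_nil (hne n)
    rw [ht]
    simp
  have hprop : ∀ n, B (v n) w ∧ ∀ u, Relation.TransGen R w u → ¬ B (v n) u :=
    fun n => (hnode (n+1)).2.2 _ (htail n)
  -- v is a fullpath
  have hfull : FullPath R v := by
    intro n
    have hch : (f (n+2)).Chain' R := (hnode (n+2)).2.1.2
    rw [hv (n+1), hv n, List.Chain', List.isChain_append] at hch
    exact hch.2.2 _ (by simp) _ rfl
  obtain ⟨δ, hδfull, hδ0, π, ξ, hπ, hξ, hcorr⟩ := (h (v 0) w (hprop 0).1).2 v hfull rfl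
  have hB : B (v (π 1)) (δ (ξ 1)) :=
    hcorr 1 (π 1) le_rfl (hπ.1 (by omega))
  have hξ1 : 1 ≤ ξ 1 := by
    have := hξ.1 (show 0 < 1 by omega)
    omega
  have htrans : Relation.TransGen R w (δ (ξ 1)) := by
    have : ∀ m, Relation.TransGen R w (δ (m+1)) := by
      intro m
      induction m with
      | zero => exact Relation.TransGen.single (hδ0 ▸ hδfull 0)
      | succ k ih => exact ih.tail (hδfull (k+1))
    obtain ⟨m, hm⟩ : ∃ m, ξ 1 = m + 1 := ⟨ξ 1 - 1, by omega⟩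
    rw [hm]; exact this m
  exact (hprop (π 1)).2 _ htrans hB
end

section
/- If sBw, s → u, and u (i.e., the node ⟨s,u⟩) is in ranktCt(M,s,w), then size(ranktCt(M,u,w)) < size(ranktCt(M,s,w)) as ordinals. -/
universe u v

section Proof

set_option linter.deprecated false

variable {S : Type u}

private lemma transGen_of_fullPath {R : S → S → Prop} {δ : ℕ → S} (hδ : FullPath R δ) :
    ∀ k, Relation.TransGen R (δ 0) (δ (k + 1)) := by
  intro k
  induction k with
  | zero => exact Relation.TransGen.single (hδ 0)
  | succ k ih => exact ih.tail (hδ (k + 1))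

private lemma exists_descending_of_not_wf {α : Type*} {r : α → α → Prop}
    (h : ¬ WellFounded r) : ∃ f : ℕ → α, ∀ n, r (f (n + 1)) (f n) := by
  obtain ⟨x, hx⟩ : ∃ x, ¬ Acc r x := by
    by_contra h'
    push_neg at h'
    exact h ⟨h'⟩
  have step : ∀ y : {a // ¬ Acc r a}, ∃ z : {a // ¬ Acc r a}, r z.1 y.1 := by
    rintro ⟨y, hy⟩
    obtain ⟨z, hz1, hz2⟩ := exists_not_acc_lt_of_not_acc hy
    exact ⟨⟨z, hz1⟩, hz2⟩
  choose g hg using step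
  refine ⟨fun n => (g^[n] ⟨x, hx⟩).1, fun n => ?_⟩
  simp only [Function.iterate_succ', Function.comp_apply]
  exact hg _

/-- The child relation of `ranktCt(M,s,w)` is well-founded (all paths are finite). -/
private lemma wf_childRel {Lbl : Type v} (R : S → S → Prop) (L : S → Lbl)
    (B : S → S → Prop) (h : IsSKS R L B) (s w : S) :
    WellFounded (ChildRel (RanktCtNode R B s w)) := by
  by_contra hwf
  obtain ⟨f, hrel⟩ := exists_descending_of_not_wf hwf
  have hT : ∀ n, RanktCtNode R B s w (f n) := fun n => (hrel n).2.1
  have hne : ∀ n, f n ≠ [] := by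
    intro n hn
    have := (hT n).2.1.1
    rw [hn] at this
    simp at this
  set σ : ℕ → S := fun n => (f n).getLast (hne n) with hσ
  have hlast : ∀ n, (f n).getLast? = some (σ n) := fun n =>
    List.getLast?_eq_getLast_of_ne_nil (hne n)
  have key : ∀ n, f (n + 1) = f n ++ [σ (n + 1)] := by
    intro n
    obtain ⟨v, hv⟩ := (hrel n).2.2
    have h1 : (f (n + 1)).getLast? = some v := by rw [hv]; exact List.getLast?_concat
    rw [hlast (n + 1)] at h1
    injection h1 with h1
    rw [hv, h1]
  have hfull : FullPath R σ := by
    intro n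
    have hc : (f (n + 1)).Chain' R := (hT (n + 1)).2.1.2
    rw [key n] at hc
    replace hc := List.isChain_append.mp hc
    exact hc.2.2 _ (hlast n) _ rfl
  have htail : ∀ n, σ (n + 1) ∈ (f (n + 1)).tail := by
    intro n
    obtain ⟨a, t, ht⟩ := List.exists_cons_of_ne_nil (hne n)
    rw [key n, ht]
    simp
  have hprop : ∀ n, B (σ (n + 1)) w ∧ ∀ v, Relation.TransGen R w v → ¬ B (σ (n + 1)) v :=
    fun n => (hT (n + 1)).2.2 _ (htail n)
  have hB0 : B (σ 0) w := by
    obtain ⟨a, t, ht⟩ := List.exists_cons_of_ne_nil (hne 0)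
    have hhead : a = s := by
      have := (hT 0).2.1.1; rw [ht] at this; simpa using this
    have hl0 := hlast 0
    rw [ht] at hl0
    cases t with
    | nil =>
      simp only [List.getLast?_singleton, Option.some.injEq] at hl0
      rw [← hl0, hhead] at *
      exact (hT 0).1
    | cons b t' =>
      rw [List.getLast?_cons_cons] at hl0
      have hmem : σ 0 ∈ (f 0).tail := by
        rw [ht]
        exact List.mem_of_getLast? hl0
      exact ((hT 0).2.2 _ hmem).1
  obtain ⟨_, hstep⟩ := h (σ 0) w hB0
  obtain ⟨δ, hδf, hδ0, π, ξ, hπ, hξ, hcorr⟩ := hstep σ hfull rfl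
  have hπ1 : 1 ≤ π 1 := by
    have h1 := hπ.1 Nat.zero_lt_one
    have h2 := hπ.2
    omega
  have hξ1 : 1 ≤ ξ 1 := by
    have h1 := hξ.1 Nat.zero_lt_one
    have h2 := hξ.2
    omega
  have hBcorr : B (σ (π 1)) (δ (ξ 1)) := hcorr 1 (π 1) le_rfl (hπ.1 Nat.one_lt_two)
  have htg : Relation.TransGen R w (δ (ξ 1)) := by
    obtain ⟨k, hk⟩ : ∃ k, ξ 1 = k + 1 := ⟨ξ 1 - 1, by omega⟩
    rw [hk, ← hδ0]
    exact transGen_of_fullPath hδf k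
  obtain ⟨m, hm⟩ : ∃ m, π 1 = m + 1 := ⟨π 1 - 1, by omega⟩
  rw [hm] at hBcorr
  exact (hprop m).2 _ htg hBcorr

private lemma node_iff {R : S → S → Prop} {B : S → S → Prop} {s u w : S}
    (hnode : RanktCtNode R B s w [s, u]) (t : List S) :
    RanktCtNode R B u w (u :: t) ↔ RanktCtNode R B s w (s :: u :: t) := by
  have hsw : B s w := hnode.1
  have hsu : R s u := by
    have := hnode.2.1.2
    exact (List.isChain_cons_cons.mp this).1
  have hPu : B u w ∧ ∀ v, Relation.TransGen R w v → ¬ B u v := hnode.2.2 u (by simp)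
  constructor
  · rintro ⟨huw, ⟨_, hchain⟩, htl⟩
    refine ⟨hsw, ⟨rfl, ?_⟩, ?_⟩
    · exact List.isChain_cons_cons.mpr ⟨hsu, hchain⟩
    · intro x hx
      rcases List.mem_cons.mp hx with rfl | hx
      · exact hPu
      · exact htl x hx
  · rintro ⟨_, ⟨_, hchain⟩, htl⟩
    replace hchain := List.isChain_cons_cons.mp hchain
    exact ⟨hPu.1, ⟨rfl, hchain.2⟩, fun x hx => htl x (List.mem_cons_of_mem _ hx)⟩

/-- If `s B w`, `s → u`, and the node `⟨s,u⟩` is in `ranktCt(M,s,w)`,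
then `size(ranktCt(M,u,w)) < size(ranktCt(M,s,w))` as ordinals. -/
theorem treeSize_lt_of_child {S : Type u} {Lbl : Type v}
    (R : S → S → Prop) (L : S → Lbl) (hR : ∀ s, ∃ u, R s u)
    (B : S → S → Prop) (h : IsSKS R L B) (s u w : S)
    (hsw : B s w) (hsu : R s u) (hnode : RanktCtNode R B s w [s, u]) :
    treeSize R B u w < treeSize R B s w := by
  have hWs := wf_childRel R L B h s w
  have hWu := wf_childRel R L B h u w
  have hroot : RanktCtNode R B s w [s] := ⟨hsw, ⟨rfl, List.isChain_singleton s⟩, by simp⟩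
  have main : ∀ l, (∀ t, l = u :: t → (hWu.apply l).rank = (hWs.apply (s :: l)).rank) := by
    intro l
    induction l using hWu.induction with
    | _ l IH =>
      rintro t rfl
      rw [(hWu.apply _).rank_eq, (hWs.apply _).rank_eq]
      apply le_antisymm
      · apply Ordinal.iSup_le
        rintro ⟨c, hc⟩
        obtain ⟨v, hv⟩ := hc.2.2
        have hc' : c = u :: (t ++ [v]) := by rw [hv]; rfl
        have hrank : (hWu.apply c).rank = (hWs.apply (s :: c)).rank := IH c hc _ hc'
        have hchild : ChildRel (RanktCtNode R B s w) (s :: c) (s :: u :: t) := by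
          refine ⟨?_, ?_, v, by rw [hv]; rfl⟩
          · rw [hc']
            exact (node_iff hnode _).mp (hc' ▸ hc.1)
          · exact (node_iff hnode _).mp hc.2.1
        calc Order.succ (hWu.apply c).rank = Order.succ (hWs.apply (s :: c)).rank := by rw [hrank]
          _ ≤ _ := Ordinal.le_iSup
              (fun b : {b // ChildRel (RanktCtNode R B s w) b (s :: u :: t)} =>
                Order.succ (hWs.apply b.1).rank) ⟨s :: c, hchild⟩
      · apply Ordinal.iSup_le
        rintro ⟨c, hc⟩
        obtain ⟨v, hv⟩ := hc.2.2
        have hc' : c = s :: (u :: (t ++ [v])) := by rw [hv]; rfl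
        have hTu : RanktCtNode R B u w (u :: (t ++ [v])) :=
          (node_iff hnode _).mpr (hc' ▸ hc.1)
        have hTut : RanktCtNode R B u w (u :: t) := (node_iff hnode _).mpr hc.2.1
        have hchild : ChildRel (RanktCtNode R B u w) (u :: (t ++ [v])) (u :: t) :=
          ⟨hTu, hTut, v, by simp⟩
        have hrank : (hWu.apply (u :: (t ++ [v]))).rank = (hWs.apply c).rank := by
          rw [hc']; exact IH _ hchild _ rfl
        calc Order.succ (hWs.apply c).rank = Order.succ (hWu.apply (u :: (t ++ [v]))).rank := by rw [hrank]
          _ ≤ _ := Ordinal.le_iSup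
              (fun b : {b // ChildRel (RanktCtNode R B u w) b (u :: t)} =>
                Order.succ (hWu.apply b.1).rank) ⟨_, hchild⟩
  have h1 : (hWu.apply [u]).rank = (hWs.apply [s, u]).rank := main [u] [] rfl
  have h2 : (hWs.apply [s, u]).rank < (hWs.apply [s]).rank :=
    (hWs.apply [s]).rank_lt_of_rel ⟨hnode, hroot, u, rfl⟩
  unfold treeSize nodeSize
  rw [dif_pos hWs, dif_pos hWu]
  rw [h1]
  exact h2

end Proof
end

section
/- If B is a skipping simulation on M and sBw, then for every state u with s → u, either uBw, or there exists v with w →^+ v and uBv. -/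
universe u v

theorem fullpath_transGen {S : Type u} {R : S → S → Prop} {δ : ℕ → S}
    (hδ : FullPath R δ) : ∀ n, 0 < n → Relation.TransGen R (δ 0) (δ n) := by
  intro n hn
  induction n with
  | zero => omega
  | succ m ih =>
    rcases Nat.eq_zero_or_pos m with hm | hm
    · subst hm; exact Relation.TransGen.single (hδ 0)
    · exact (ih hm).tail (hδ m)

/-- If `B` is an SKS and `s B w`, then for every `u` with `s → u`,
either `u B w` or there is `v` with `w →⁺ v` and `u B v`. -/
theorem sks_step {S : Type u} {Lbl : Type v}
    (R : S → S → Prop) (L : S → Lbl) (hR : ∀ s, ∃ u, R s u)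
    (B : S → S → Prop) (h : IsSKS R L B)
    (s u w : S) (hsw : B s w) (hsu : R s u) :
    B u w ∨ ∃ v, Relation.TransGen R w v ∧ B u v := by
  classical
  -- build a fullpath starting s, u, ...
  let g : ℕ → S := fun n => Nat.rec u (fun _ x => (hR x).choose) n
  have hg : ∀ n, R (g n) (g (n+1)) := fun n => (hR (g n)).choose_spec
  let σ : ℕ → S := fun n => match n with | 0 => s | m+1 => g m
  have hσ : FullPath R σ := by
    intro i
    match i with
    | 0 => exact hsu
    | m+1 => exact hg m
  obtain ⟨δ, hδ, hδ0, π, ξ, hπ, hξ, hcorr⟩ := (h s w hsw).2 σ hσ rfl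
  have hπ1 : 1 ≤ π 1 := by
    have h1 := hπ.1 (Nat.zero_lt_one); have h2 := hπ.2; omega
  by_cases h1 : 1 < π 1
  · left
    have := hcorr 0 1 (by rw [hπ.2]; omega) (show 1 < π 1 from h1)
    rwa [hξ.2, hδ0] at this
  · -- π 1 = 1
    have hπ1e : π 1 = 1 := by omega
    right
    have hξ1 : 0 < ξ 1 := by
      have h1 := hξ.1 (Nat.zero_lt_one); have h2 := hξ.2; omega
    refine ⟨δ (ξ 1), ?_, ?_⟩
    · have := fullpath_transGen hδ (ξ 1) hξ1
      rwa [hδ0] at this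
    · exact hcorr 1 1 (le_of_eq hπ1e) (by have := hπ.1 (show (1:ℕ) < 1+1 by omega); omega)
end

section
/- If a concrete system is a skipping refinement of an abstract system via refinement map r, then for every fullpath σ of the concrete system there exists a fullpath δ of the abstract system starting at some state with the same label as r(σ(0)), such that every concrete state along σ has (via r) the same label as its matched abstract state. -/
universe u v

section Refinement

variable {C A : Type u} {Lbl : Type v}

/-- Disjoint-union transition relation `→_C ⊎ →_A`. -/
def SumRel (RC : C → C → Prop) (RA : A → A → Prop) : C ⊕ A → C ⊕ A → Prop
  | Sum.inl x, Sum.inl y => RC x y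
  | Sum.inr x, Sum.inr y => RA x y
  | _, _ => False

/-- Labeling of the disjoint union: `𝓛(s) = L_A(s)` on abstract states and
`𝓛(s) = L_A(r.s)` on concrete states. -/
def SumLabel (r : C → A) (LA : A → Lbl) : C ⊕ A → Lbl
  | Sum.inl c => LA (r c)
  | Sum.inr a => LA a

/-- Lift `B ⊆ S_C × S_A` to the disjoint union. -/
def LiftRel (B : C → A → Prop) : C ⊕ A → C ⊕ A → Prop
  | Sum.inl c, Sum.inr a => B c a
  | _, _ => False

/-- `M_C ≲_r M_A`: skipping refinement with respect to refinement map `r`. -/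
def SkipRefinement (RC : C → C → Prop) (RA : A → A → Prop) (LA : A → Lbl) (r : C → A) : Prop :=
  ∃ B : C → A → Prop, (∀ s, B s (r s)) ∧
    IsSKS (SumRel RC RA) (SumLabel r LA) (LiftRel B)

end Refinement
/-- If `M_C ≲_r M_A`, then every fullpath of the concrete system is
matched by a fullpath of the abstract system starting at a state with the same
label as `r(σ(0))`, such that every concrete state along `σ` has (via `r`) the
same label as its matched abstract state. -/
theorem skip_refinement_label_match {C A : Type u} {Lbl : Type v}
    (RC : C → C → Prop) (RA : A → A → Prop) (LA : A → Lbl) (r : C → A)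
    (hRC : ∀ s, ∃ u, RC s u) (hRA : ∀ s, ∃ u, RA s u)
    (href : SkipRefinement RC RA LA r) :
    ∀ σ : ℕ → C, FullPath RC σ →
      ∃ δ : ℕ → A, FullPath RA δ ∧ LA (δ 0) = LA (r (σ 0)) ∧
        Match (fun (c : C) (a : A) => LA (r c) = LA a) σ δ := by
  intro σ hσ
  obtain ⟨B, hBr, hSKS⟩ := href
  have hσ' : FullPath (SumRel RC RA) (fun n => Sum.inl (σ n)) := fun i => hσ i
  obtain ⟨hlab, hmatch⟩ := hSKS (Sum.inl (σ 0)) (Sum.inr (r (σ 0))) (hBr (σ 0))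
  obtain ⟨δ', hδ'full, hδ'0, π, ξ, hπ, hξ, hcorr⟩ :=
    hmatch (fun n => Sum.inl (σ n)) hσ' rfl
  -- δ' stays in the right component
  have hright : ∀ n, ∃ a, δ' n = Sum.inr a := by
    intro n
    induction n with
    | zero => exact ⟨r (σ 0), hδ'0⟩
    | succ k ih =>
      obtain ⟨a, ha⟩ := ih
      have := hδ'full k
      rw [ha] at this
      cases h : δ' (k + 1) with
      | inl c => rw [h] at this; exact absurd this (by simp [SumRel])
      | inr b => exact ⟨b, rfl⟩
  choose δ hδ using hright
  -- B implies label equality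
  have hBlab : ∀ c a, B c a → LA (r c) = LA a := by
    intro c a hB
    exact (hSKS (Sum.inl c) (Sum.inr a) hB).1
  refine ⟨δ, ?_, ?_, π, ξ, hπ, hξ, ?_⟩
  · intro i
    have := hδ'full i
    rw [hδ i, hδ (i + 1)] at this
    exact this
  · have : Sum.inr (δ 0) = Sum.inr (r (σ 0)) := (hδ 0).symm.trans hδ'0
    rw [Sum.inr.injEq] at this
    rw [this]
  · intro i n h1 h2
    have hB := hcorr i n h1 h2
    rw [hδ (ξ i)] at hB
    exact hBlab _ _ hB
end

section
/- Skipping refinement is transitive when refinement maps compose: if M_C ≲_{r₁} M_B via the disjoint-union SKS construction and M_B ≲_{r₂} M_A, then M_C ≲_{r₂∘r₁} M_A. -/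
universe u v

section Aux

lemma seg_exists {π : ℕ → ℕ} (hπ : IsINC π) (n : ℕ) : ∃ i, π i ≤ n ∧ n < π (i+1) := by
  classical
  have hb : ∃ i, n < π (i+1) :=
    ⟨n, lt_of_lt_of_le (Nat.lt_succ_self n) hπ.1.le_apply⟩
  refine ⟨Nat.find hb, ?_, Nat.find_spec hb⟩
  rcases Nat.eq_zero_or_pos (Nat.find hb) with h | h
  · rw [h, hπ.2]; exact Nat.zero_le n
  · obtain ⟨j, hj⟩ : ∃ j, Nat.find hb = j + 1 := ⟨Nat.find hb - 1, by omega⟩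
    have hmin := Nat.find_min hb (show j < Nat.find hb by omega)
    rw [hj]; omega

lemma seg_le {π : ℕ → ℕ} (hπ : StrictMono π) {i j n m : ℕ}
    (h1 : π i ≤ n) (h2 : m < π (j+1)) (hnm : n ≤ m) : i ≤ j := by
  by_contra h
  push_neg at h
  have : π (j+1) ≤ π i := hπ.monotone (by omega)
  omega

lemma match_comp {S T U : Type*} {B₁ : S → T → Prop} {B₂ : T → U → Prop}
    {σ : ℕ → S} {δ : ℕ → T} {ε : ℕ → U}
    (h1 : Match B₁ σ δ) (h2 : Match B₂ δ ε) :
    Match (fun s u => ∃ t, B₁ s t ∧ B₂ t u) σ ε := by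
  classical
  obtain ⟨π, ξ, hπ, hξ, hC1⟩ := h1
  obtain ⟨π', ξ', hπ', hξ', hC2⟩ := h2
  choose g hg1 hg2 using fun i => seg_exists hπ' (ξ i)
  have gmono : Monotone g := fun i j hij =>
    seg_le hπ'.1 (hg1 i) (hg2 j) (hξ.1.monotone hij)
  have g0 : g 0 = 0 := by
    have h01 := hg1 0
    rw [hξ.2] at h01
    have h0 : π' (g 0) = π' 0 := by
      rw [hπ'.2]; omega
    exact hπ'.1.injective h0
  have gunb : ∀ i₀, ∃ i, i₀ < i ∧ g i₀ < g i := by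
    intro i₀
    refine ⟨max (i₀+1) (π' (g i₀ + 1)), by omega, ?_⟩
    set i := max (i₀+1) (π' (g i₀ + 1)) with hi
    have hξi : π' (g i₀ + 1) ≤ ξ i := le_trans (le_max_right _ _) hξ.1.le_apply
    have h2 := hg2 i
    have hlt : π' (g i₀ + 1) < π' (g i + 1) := lt_of_le_of_lt hξi h2
    have := hπ'.1.lt_iff_lt.mp hlt
    omega
  let a : ℕ → ℕ := fun k => Nat.rec (motive := fun _ => ℕ) 0 (fun _ ak => Nat.find (gunb ak)) k
  have ha0 : a 0 = 0 := rfl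
  have haspec : ∀ k, a k < a (k+1) ∧ g (a k) < g (a (k+1)) := fun k =>
    Nat.find_spec (gunb (a k))
  have hamin : ∀ k i, a k ≤ i → i < a (k+1) → g i = g (a k) := by
    intro k i h1 h2
    refine le_antisymm ?_ (gmono h1)
    by_contra hlt
    push_neg at hlt
    rcases eq_or_lt_of_le h1 with heq | hlt'
    · rw [← heq] at hlt; omega
    · have : a (k+1) ≤ i := Nat.find_le ⟨hlt', hlt⟩
      omega
  refine ⟨fun k => π (a k), fun k => ξ' (g (a k)), ⟨?_, ?_⟩, ⟨?_, ?_⟩, ?_⟩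
  · exact hπ.1.comp (strictMono_nat_of_lt_succ fun k => (haspec k).1)
  · show π (a 0) = 0; rw [ha0, hπ.2]
  · exact hξ'.1.comp (strictMono_nat_of_lt_succ fun k => (haspec k).2)
  · show ξ' (g (a 0)) = 0; rw [ha0, g0, hξ'.2]
  · intro k n hn1 hn2
    replace hn1 : π (a k) ≤ n := hn1
    replace hn2 : n < π (a (k+1)) := hn2
    obtain ⟨i, hi1, hi2⟩ := seg_exists hπ n
    have hik : a k ≤ i := seg_le hπ.1 hn1 hi2 le_rfl
    have hik2 : i < a (k+1) := by
      by_contra h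
      push_neg at h
      have := hπ.1.monotone h
      omega
    have hgi : g i = g (a k) := hamin k i hik hik2
    refine ⟨δ (ξ i), hC1 i n hi1 hi2, ?_⟩
    have := hC2 (g i) (ξ i) (hg1 i) (hg2 i)
    show B₂ (δ (ξ i)) (ε (ξ' (g (a k))))
    rw [← hgi]
    exact this

lemma sum_path_left {C A : Type u} {RC : C → C → Prop} {RA : A → A → Prop}
    {σ : ℕ → C ⊕ A} (h : FullPath (SumRel RC RA) σ) {c : C} (h0 : σ 0 = Sum.inl c) :
    ∃ σC : ℕ → C, (∀ n, σ n = Sum.inl (σC n)) ∧ FullPath RC σC ∧ σC 0 = c := by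
  have key : ∀ n, ∃ x, σ n = Sum.inl x := by
    intro n
    induction n with
    | zero => exact ⟨c, h0⟩
    | succ n ih =>
      obtain ⟨x, hx⟩ := ih
      have hn := h n
      rw [hx] at hn
      rcases hy : σ (n+1) with y | y
      · exact ⟨y, rfl⟩
      · rw [hy] at hn; exact hn.elim
  choose σC hσC using key
  refine ⟨σC, hσC, ?_, Sum.inl.inj ((hσC 0).symm.trans h0)⟩
  intro n
  have hn := h n
  rw [hσC n, hσC (n+1)] at hn
  exact hn

lemma sum_path_right {C A : Type u} {RC : C → C → Prop} {RA : A → A → Prop}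
    {σ : ℕ → C ⊕ A} (h : FullPath (SumRel RC RA) σ) {a : A} (h0 : σ 0 = Sum.inr a) :
    ∃ σA : ℕ → A, (∀ n, σ n = Sum.inr (σA n)) ∧ FullPath RA σA ∧ σA 0 = a := by
  have key : ∀ n, ∃ x, σ n = Sum.inr x := by
    intro n
    induction n with
    | zero => exact ⟨a, h0⟩
    | succ n ih =>
      obtain ⟨x, hx⟩ := ih
      have hn := h n
      rw [hx] at hn
      rcases hy : σ (n+1) with y | y
      · rw [hy] at hn; exact hn.elim
      · exact ⟨y, rfl⟩
  choose σA hσA using key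
  refine ⟨σA, hσA, ?_, Sum.inr.inj ((hσA 0).symm.trans h0)⟩
  intro n
  have hn := h n
  rw [hσA n, hσA (n+1)] at hn
  exact hn

end Aux

/-- Skipping refinement is transitive when the refinement maps
compose (the intermediate system is labeled compatibly via `r₂`):
if `M_C ≲_{r₁} M_B` and `M_B ≲_{r₂} M_A` then `M_C ≲_{r₂ ∘ r₁} M_A`. -/
theorem skip_refinement_trans {C B' A : Type u} {Lbl : Type v}
    (RC : C → C → Prop) (RB : B' → B' → Prop) (RA : A → A → Prop)
    (LA : A → Lbl) (r₁ : C → B') (r₂ : B' → A)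
    (hRC : ∀ s, ∃ u, RC s u) (hRB : ∀ s, ∃ u, RB s u) (hRA : ∀ s, ∃ u, RA s u)
    (h₁ : SkipRefinement RC RB (fun b => LA (r₂ b)) r₁)
    (h₂ : SkipRefinement RB RA LA r₂) :
    SkipRefinement RC RA LA (r₂ ∘ r₁) := by
  obtain ⟨B₁, hB₁r, hSKS₁⟩ := h₁
  obtain ⟨B₂, hB₂r, hSKS₂⟩ := h₂
  refine ⟨fun c a => ∃ b, B₁ c b ∧ B₂ b a, fun s => ⟨r₁ s, hB₁r s, hB₂r (r₁ s)⟩, ?_⟩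
  rintro (c | a') (c' | a) hsw
  · exact hsw.elim
  swap
  · exact hsw.elim
  swap
  · exact hsw.elim
  obtain ⟨b, hcb, hba⟩ := hsw
  have H1 := hSKS₁ (Sum.inl c) (Sum.inr b) hcb
  have H2 := hSKS₂ (Sum.inl b) (Sum.inr a) hba
  constructor
  · exact H1.1.trans H2.1
  intro σ hσ h0
  obtain ⟨σC, hσC, hσCpath, hσC0⟩ := sum_path_left hσ h0
  have hσ₁ : FullPath (SumRel RC RB) (Sum.inl ∘ σC) := fun n => hσCpath n
  obtain ⟨δ₁, hδ₁path, hδ₁0, hM1⟩ := H1.2 (Sum.inl ∘ σC) hσ₁ (by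
    show Sum.inl (σC 0) = Sum.inl c; rw [hσC0])
  obtain ⟨δB, hδB, hδBpath, hδB0⟩ := sum_path_right hδ₁path hδ₁0
  have hσ₂ : FullPath (SumRel RB RA) (Sum.inl ∘ δB) := fun n => hδBpath n
  obtain ⟨δ₂, hδ₂path, hδ₂0, hM2⟩ := H2.2 (Sum.inl ∘ δB) hσ₂ (by
    show Sum.inl (δB 0) = Sum.inl b; rw [hδB0])
  obtain ⟨δA, hδA, hδApath, hδA0⟩ := sum_path_right hδ₂path hδ₂0
  -- extract plain matches
  have hM1' : Match B₁ σC δB := by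
    obtain ⟨π, ξ, hπ, hξ, hC⟩ := hM1
    refine ⟨π, ξ, hπ, hξ, ?_⟩
    intro i n h1 h2
    have := hC i n h1 h2
    rw [hδB (ξ i)] at this
    exact this
  have hM2' : Match B₂ δB δA := by
    obtain ⟨π, ξ, hπ, hξ, hC⟩ := hM2
    refine ⟨π, ξ, hπ, hξ, ?_⟩
    intro i n h1 h2
    have := hC i n h1 h2
    rw [hδA (ξ i)] at this
    exact this
  have hM := match_comp hM1' hM2'
  refine ⟨Sum.inr ∘ δA, fun n => hδApath n, by
    show Sum.inr (δA 0) = Sum.inr a; rw [hδA0], ?_⟩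
  obtain ⟨π, ξ, hπ, hξ, hC⟩ := hM
  refine ⟨π, ξ, hπ, hξ, ?_⟩
  intro i n h1 h2
  have := hC i n h1 h2
  rw [hσC n]
  exact this
end

section
/- If B is an SKS on M and sBw, s → u, and for all v with w →^+ v we have ¬(uBv), then uBw. (Key step of the completeness proof: in any matching of a fullpath through s,u by a fullpath from w, the match index of u must be 0.) -/
universe u v

/-- If `B` is an SKS, `s B w`, `s → u`, and no `v` with `w →⁺ v`
satisfies `u B v`, then `u B w`. -/
theorem sks_step_match_at_zero {S : Type u} {Lbl : Type v}
    (R : S → S → Prop) (L : S → Lbl) (hR : ∀ s, ∃ u, R s u)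
    (B : S → S → Prop) (h : IsSKS R L B)
    (s u w : S) (hsw : B s w) (hsu : R s u)
    (hno : ∀ v, Relation.TransGen R w v → ¬ B u v) :
    B u w := by
  classical
  -- build a fullpath starting s, u
  choose f hf using hR
  let g : ℕ → S := fun n => Nat.rec u (fun _ x => f x) n
  let σ : ℕ → S := fun n => Nat.rec s (fun m _ => g m) n
  have hσ0 : σ 0 = s := rfl
  have hσ1 : σ 1 = u := rfl
  have hfull : FullPath R σ := by
    intro i
    cases i with
    | zero => exact hsu
    | succ n => exact hf (g n)
  obtain ⟨δ, hδfull, hδ0, π, ξ, hπ, hξ, hcorr⟩ := (h s w hsw).2 σ hfull hσ0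
  -- reachability of δ k for k ≥ 1
  have hreach : ∀ k, 1 ≤ k → Relation.TransGen R w (δ k) := by
    intro k hk
    induction k with
    | zero => omega
    | succ n ih =>
      rcases Nat.eq_or_lt_of_le hk with h1 | h1
      · have : δ 0 = w := hδ0
        have := hδfull 0
        rw [hδ0] at this
        have hn : n = 0 := by omega
        subst hn
        exact Relation.TransGen.single this
      · exact (ih (by omega)).tail (hδfull n)
  have hπ0 : π 0 = 0 := hπ.2
  have hξ0 : ξ 0 = 0 := hξ.2
  have hπ1 : 1 ≤ π 1 := by
    have := hπ.1 (show (0:ℕ) < 1 by omega)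
    omega
  rcases Nat.eq_or_lt_of_le hπ1 with h1 | h1
  · -- π 1 = 1, so u is in segment 1, B u (δ (ξ 1)), contradiction
    have hπ2 : π 1 < π (1+1) := hπ.1 (by omega)
    have hb : B (σ 1) (δ (ξ 1)) := hcorr 1 1 (by omega) (by omega)
    have hξ1 : 1 ≤ ξ 1 := by
      have := hξ.1 (show (0:ℕ) < 1 by omega)
      omega
    exact absurd hb (by rw [hσ1] at hb ⊢; exact hno _ (hreach _ hξ1))
  · have h1' : 1 < π (0+1) := h1
    have hb : B (σ 1) (δ (ξ 0)) := hcorr 0 1 (by omega) (by omega)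
    rw [hσ1, hξ0, hδ0] at hb
    exact hb
end
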